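/- Let X be a finite simple graph and c ≥ 2 an integer. If there is a quantum homomorphism from X to the complete graph K_c, then for some m ≥ 1 there exist unit vectors u_x ∈ ℝ^m (x ∈ V(X)) with u_x · u_{x'} = −1/(c−1) whenever x,x' are adjacent in X. In other words, ϑ̄(X) ≤ χ_q(X). -/

import Mathlib

open Matrix Finset

/-- A quantum homomorphism from `X` to `Y`: for some `d ≥ 1` there are complex `d × d`
projectors `E x y` (Hermitian idempotents) with `∑ y, E x y = 1` for every `x`,
`E x y * E x y' = 0` whenever `y ≠ y'`, and `E x y * E x' y' = 0` whenever `x, x'`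
are adjacent in `X` and `y, y'` are equal or nonadjacent in `Y`. -/
def IsQuantumHom {V W : Type} [Fintype V] [Fintype W]
    (X : SimpleGraph V) (Y : SimpleGraph W) : Prop :=
  ∃ d : ℕ, 0 < d ∧ ∃ E : V → W → Matrix (Fin d) (Fin d) ℂ,
    (∀ x y, (E x y).IsHermitian ∧ E x y * E x y = E x y) ∧
    (∀ x, ∑ y, E x y = 1) ∧
    (∀ x y y', y ≠ y' → E x y * E x y' = 0) ∧
    (∀ x x' y y', X.Adj x x' → ¬ Y.Adj y y' → E x y * E x' y' = 0)


/-- If `X →q K_c` (with `c ≥ 2`), then `X` has a `(-1/(c-1))`-representation;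
in other words `ϑ̄(X) ≤ χ_q(X)`. -/
theorem alphaRep_of_quantum_coloring {V : Type} [Fintype V]
    (X : SimpleGraph V) (c : ℕ) (hc : 2 ≤ c)
    (hq : IsQuantumHom X (⊤ : SimpleGraph (Fin c))) :
    ∃ m : ℕ, 1 ≤ m ∧ ∃ u : V → (Fin m → ℝ),
      (∀ x, ∑ i, u x i * u x i = 1) ∧
      (∀ x x', X.Adj x x' → ∑ i, u x i * u x' i = -1 / ((c : ℝ) - 1)) := by
  classical
  obtain ⟨d, hd, E, hproj, hsum, horth, hadj⟩ := hq
  have hc2 : (2:ℝ) ≤ (c:ℝ) := by exact_mod_cast hc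
  have hc1 : (0:ℝ) < (c:ℝ) - 1 := by linarith
  have hc0 : (0:ℝ) < (c:ℝ) := by linarith
  have hd0 : (0:ℝ) < (d:ℝ) := by exact_mod_cast hd
  -- simplex vectors in ℝ^c with Gram matrix  1 on the diagonal, -1/(c-1) off it
  set a : ℝ := Real.sqrt ((c:ℝ) / ((c:ℝ) - 1)) with ha
  have haa : a * a = (c:ℝ) / ((c:ℝ) - 1) := Real.mul_self_sqrt (by positivity)
  set s : Fin c → Fin c → ℝ := fun y i => a * ((if i = y then 1 else 0) - 1 / (c:ℝ))
    with hs
  have hsdot : ∀ y y' : Fin c, (∑ i, s y i * s y' i)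
      = if y = y' then 1 else -1 / ((c:ℝ) - 1) := by
    intro y y'
    have expand : ∀ i : Fin c, s y i * s y' i
        = (a*a) * ((if i = y then (1:ℝ) else 0) * (if i = y' then 1 else 0))
          - (a*a) * (1/(c:ℝ)) * (if i = y then 1 else 0)
          - (a*a) * (1/(c:ℝ)) * (if i = y' then 1 else 0)
          + (a*a) * (1/(c:ℝ)) * (1/(c:ℝ)) := by
      intro i; simp only [hs]; ring
    rw [Finset.sum_congr rfl fun i _ => expand i]
    have h1 : ∑ i : Fin c, (if i = y then (1:ℝ) else 0) * (if i = y' then 1 else 0)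
        = if y = y' then 1 else 0 := by
      simp [ite_and, Finset.sum_ite_eq', mul_ite, ite_mul, eq_comm]
    simp only [Finset.sum_add_distrib, Finset.sum_sub_distrib, ← Finset.mul_sum,
      Finset.sum_const, Finset.card_univ, Fintype.card_fin, nsmul_eq_mul]
    rw [h1]
    simp only [Finset.sum_ite_eq', Finset.mem_univ, if_true]
    rcases eq_or_ne y y' with rfl | hne
    · simp only [if_pos rfl, haa, if_true]
      field_simp
      ring
    · rw [if_neg hne, if_neg hne, haa]
      field_simp
      ring
  -- the real vectors (indexed by Fin c × Fin d × Fin d × Bool)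
  set g : V → Fin c × Fin d × Fin d × Bool → ℝ := fun x p =>
    (Real.sqrt d)⁻¹ * ∑ y, s y p.1 *
      (if p.2.2.2 then (E x y p.2.1 p.2.2.1).re else (E x y p.2.1 p.2.2.1).im) with hg
  have hsd : (Real.sqrt d)⁻¹ * (Real.sqrt d)⁻¹ = (d:ℝ)⁻¹ := by
    rw [← mul_inv, Real.mul_self_sqrt hd0.le]
  -- the Gram matrix of the vectors g, via traces
  have hT : ∀ (A B : Matrix (Fin d) (Fin d) ℂ), B.IsHermitian →
      (∑ j, ∑ k, ((A j k).re * (B j k).re + (A j k).im * (B j k).im))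
        = ((A * B).trace).re := by
    intro A B hB
    have h1 : (A * B).trace = ∑ j, ∑ k, A j k * B k j := by
      simp [Matrix.trace, Matrix.mul_apply, Matrix.diag]
    rw [h1, Complex.re_sum]
    refine Finset.sum_congr rfl fun j _ => ?_
    rw [Complex.re_sum]
    refine Finset.sum_congr rfl fun k _ => ?_
    rw [← hB.apply j k]
    simp [Complex.mul_re]
    ring
  have key : ∀ x x' : V, (∑ p, g x p * g x' p)
      = (d:ℝ)⁻¹ * ∑ y, ∑ y', (∑ i, s y i * s y' i) * ((E x y * E x' y').trace).re := by
    intro x x'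
    have step1 : ∀ p : Fin c × Fin d × Fin d × Bool,
        g x p * g x' p
        = ∑ q : Fin c × Fin c, (d:ℝ)⁻¹ * (s q.1 p.1 * s q.2 p.1) *
            ((if p.2.2.2 then (E x q.1 p.2.1 p.2.2.1).re else (E x q.1 p.2.1 p.2.2.1).im)
             * (if p.2.2.2 then (E x' q.2 p.2.1 p.2.2.1).re else (E x' q.2 p.2.1 p.2.2.1).im)) := by
      intro p
      rw [hg]
      simp only
      rw [mul_mul_mul_comm, hsd, Finset.sum_mul_sum, Fintype.sum_prod_type, Finset.mul_sum]
      refine Finset.sum_congr rfl fun i _ => ?_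
      rw [Finset.mul_sum]
      exact Finset.sum_congr rfl fun j _ => by ring
    rw [Finset.sum_congr rfl fun p _ => step1 p, Finset.sum_comm]
    rw [Finset.mul_sum, Fintype.sum_prod_type]
    refine Finset.sum_congr rfl fun y _ => ?_
    rw [Finset.mul_sum]
    refine Finset.sum_congr rfl fun y' _ => ?_
    rw [← hT (E x y) (E x' y') (hproj x' y').1]
    simp only [Fintype.sum_prod_type, Fintype.sum_bool, if_true, if_false,
      Bool.false_eq_true, Finset.mul_sum, Finset.sum_mul]
    have comm3 : ∀ (f : Fin c → Fin d → Fin d → ℝ),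
        (∑ j : Fin d, ∑ k : Fin d, ∑ i : Fin c, f i j k)
          = ∑ i : Fin c, ∑ j : Fin d, ∑ k : Fin d, f i j k := by
      intro f
      calc (∑ j : Fin d, ∑ k : Fin d, ∑ i : Fin c, f i j k)
          = ∑ j : Fin d, ∑ i : Fin c, ∑ k : Fin d, f i j k :=
            Finset.sum_congr rfl fun j _ => Finset.sum_comm
        _ = ∑ i : Fin c, ∑ j : Fin d, ∑ k : Fin d, f i j k := Finset.sum_comm
    rw [comm3]
    exact Finset.sum_congr rfl fun i _ => Finset.sum_congr rfl fun j _ =>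
      Finset.sum_congr rfl fun k _ => by ring
  -- sum of traces of the projectors is d
  have htr : ∀ x : V, (∑ y, ((E x y).trace).re) = (d:ℝ) := by
    intro x
    rw [← Complex.re_sum, ← Matrix.trace_sum, hsum x, Matrix.trace_one]
    simp
  -- unit norm
  have hnorm : ∀ x : V, (∑ p, g x p * g x p) = 1 := by
    intro x
    rw [key x x]
    have h1 : ∀ y : Fin c, (∑ y', (∑ i, s y i * s y' i) * ((E x y * E x y').trace).re)
        = ((E x y).trace).re := by
      intro y
      rw [Finset.sum_eq_single y]
      · rw [hsdot, if_pos rfl, (hproj x y).2, one_mul]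
      · intro y' _ hy'
        rw [horth x y y' (Ne.symm hy')]
        simp
      · simp
    rw [Finset.sum_congr rfl fun y _ => h1 y, htr x, inv_mul_cancel₀ hd0.ne']
  -- inner product on edges
  have hedge : ∀ x x' : V, X.Adj x x' → (∑ p, g x p * g x' p) = -1/((c:ℝ)-1) := by
    intro x x' hxx
    rw [key x x']
    have hzero : ∀ y : Fin c, E x y * E x' y = 0 := fun y =>
      hadj x x' y y hxx (by simp)
    have h2 : ∀ y y' : Fin c, (∑ i, s y i * s y' i) * ((E x y * E x' y').trace).re
        = (-1/((c:ℝ)-1)) * ((E x y * E x' y').trace).re := by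
      intro y y'
      rcases eq_or_ne y y' with rfl | hne
      · rw [hzero y]; simp
      · rw [hsdot, if_neg hne]
    rw [Finset.sum_congr rfl fun y _ =>
      Finset.sum_congr rfl fun y' _ => h2 y y']
    have h3 : ∀ y : Fin c, (∑ y', ((E x y * E x' y').trace).re) = ((E x y).trace).re := by
      intro y
      rw [← Complex.re_sum, ← Matrix.trace_sum, ← Finset.mul_sum, hsum x', mul_one]
    simp only [← Finset.mul_sum]
    rw [Finset.sum_congr rfl fun y _ => h3 y, htr x]
    field_simp
  -- transport to Fin m
  have hne : Nonempty (Fin c × Fin d × Fin d × Bool) :=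
    ⟨(⟨0, by omega⟩, ⟨0, hd⟩, ⟨0, hd⟩, true)⟩
  refine ⟨Fintype.card (Fin c × Fin d × Fin d × Bool), Fintype.card_pos, ?_⟩
  set e := Fintype.equivFin (Fin c × Fin d × Fin d × Bool) with he
  refine ⟨fun x i => g x (e.symm i), fun x => ?_, fun x x' hxx => ?_⟩
  · rw [Equiv.sum_comp e.symm (fun p => g x p * g x p)]
    exact hnorm x
  · rw [Equiv.sum_comp e.symm (fun p => g x p * g x' p)]
    exact hedge x x' hxx
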